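/- arXiv:2202.04154 — 2 statements merged into one kernel-verified Lean document; each statement's English description precedes it below -/
import Mathlib

section
/- In the toy heterogeneous-mean panel model, the plug-in variance estimator that omits coefficient heterogeneity, V̂_under = (1/(N²T²))Σ_{i=1}^N Σ_{t=1}^T (y_{i,t} − β̂_i)² with y_{i,t} = β_i + e_{i,t}, satisfies E[V̂_under] = (T−1)σ²/(N·T²) and Var(θ̂) − E[V̂_under] = v/N + σ²/(N·T²); in particular it under-estimates the true variance by at least v/N whenever v > 0. -/
open MeasureTheory ProbabilityTheory Filter Finset

lemma aux_integrable_mul {Ω : Type*} [MeasurableSpace Ω] {μ : Measure Ω}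
    {f g : Ω → ℝ} (hf : MemLp f 2 μ) (hg : MemLp g 2 μ) :
    Integrable (fun ω => f ω * g ω) μ := by
  have h : (fun ω => f ω * g ω)
      = fun ω => (((f ω + g ω) ^ 2 - f ω ^ 2) - g ω ^ 2) / 2 := by
    funext ω; ring
  rw [h]
  exact (((hf.add hg).integrable_sq.sub hf.integrable_sq).sub hg.integrable_sq).div_const 2

lemma aux_memL2_avg {Ω : Type*} [MeasurableSpace Ω] {μ : Measure Ω}
    {T : ℕ} {c : ℝ} {e : ℕ → Ω → ℝ} (he : ∀ t, MemLp (e t) 2 μ) :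
    MemLp (fun ω => c * ∑ t ∈ Finset.range T, e t ω) 2 μ := by
  have h : (fun ω => c * ∑ t ∈ Finset.range T, e t ω)
      = fun ω => c * (∑ t ∈ Finset.range T, e t) ω := by
    funext ω; simp [Finset.sum_apply]
  rw [h]
  exact (memLp_finset_sum' _ (fun t _ => he t)).const_mul c

lemma aux_key {Ω : Type*} [MeasurableSpace Ω] (μ : Measure Ω) [IsProbabilityMeasure μ]
    (σ2 : ℝ) (T : ℕ) (hT : 1 ≤ T) (e : ℕ → Ω → ℝ)
    (heL2 : ∀ t, MemLp (e t) 2 μ)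
    (hE2 : ∀ t, ∫ ω, e t ω ^ 2 ∂μ = σ2)
    (hcross : ∀ s t, s ≠ t → ∫ ω, e s ω * e t ω ∂μ = 0)
    {t : ℕ} (ht : t ∈ Finset.range T) :
    ∫ ω, (e t ω - (1 / T : ℝ) * ∑ s ∈ Finset.range T, e s ω) ^ 2 ∂μ
      = ((T : ℝ) - 1) * σ2 / T := by
  have hT0 : (T : ℝ) ≠ 0 := by positivity
  set g : Ω → ℝ := fun ω => (1 / T : ℝ) * ∑ s ∈ Finset.range T, e s ω with hg
  have hgL2 : MemLp g 2 μ := aux_memL2_avg heL2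
  have hE2' : ∀ s, ∫ ω, e s ω * e s ω ∂μ = σ2 := by
    intro s; simpa [pow_two] using hE2 s
  have h2 : ∫ ω, e t ω * g ω ∂μ = σ2 / T := by
    have heq : (fun ω => e t ω * g ω)
        = fun ω => ∑ s ∈ Finset.range T, (1 / T : ℝ) * (e t ω * e s ω) := by
      funext ω
      simp only [hg]
      rw [Finset.mul_sum, Finset.mul_sum]
      exact Finset.sum_congr rfl fun s _ => by ring
    rw [heq, integral_finset_sum _
      (fun s _ => (aux_integrable_mul (heL2 t) (heL2 s)).const_mul _)]
    have : ∀ s ∈ Finset.range T,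
        ∫ ω, (1 / T : ℝ) * (e t ω * e s ω) ∂μ
          = (1 / T : ℝ) * ∫ ω, e t ω * e s ω ∂μ :=
      fun s _ => integral_const_mul _ _
    rw [Finset.sum_congr rfl this, Finset.sum_eq_single t]
    · rw [hE2']; ring
    · intro s hs hst
      rw [hcross t s (Ne.symm hst), mul_zero]
    · intro h; exact absurd ht h
  have h3 : ∫ ω, g ω ^ 2 ∂μ = σ2 / T := by
    have heq : (fun ω => g ω ^ 2)
        = fun ω => ∑ s ∈ Finset.range T, ∑ r ∈ Finset.range T,
            ((1 / T : ℝ)) ^ 2 * (e s ω * e r ω) := by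
      funext ω
      rw [hg, mul_pow, pow_two (∑ s ∈ Finset.range T, e s ω), Finset.sum_mul_sum,
        Finset.mul_sum]
      exact Finset.sum_congr rfl fun s _ => by rw [Finset.mul_sum]
    rw [heq, integral_finset_sum _ (fun s _ => integrable_finset_sum _
      (fun r _ => (aux_integrable_mul (heL2 s) (heL2 r)).const_mul _))]
    have hinner : ∀ s ∈ Finset.range T,
        (∫ ω, ∑ r ∈ Finset.range T, ((1 / T : ℝ)) ^ 2 * (e s ω * e r ω) ∂μ)
          = (1 / T : ℝ) ^ 2 * σ2 := by
      intro s hs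
      rw [integral_finset_sum _
        (fun r _ => (aux_integrable_mul (heL2 s) (heL2 r)).const_mul _)]
      have : ∀ r ∈ Finset.range T,
          ∫ ω, ((1 / T : ℝ)) ^ 2 * (e s ω * e r ω) ∂μ
            = (1 / T : ℝ) ^ 2 * ∫ ω, e s ω * e r ω ∂μ :=
        fun r _ => integral_const_mul _ _
      rw [Finset.sum_congr rfl this, Finset.sum_eq_single s]
      · rw [hE2']
      · intro r hr hrs; rw [hcross s r (Ne.symm hrs), mul_zero]
      · intro h; exact absurd hs h
    rw [Finset.sum_congr rfl hinner, Finset.sum_const, Finset.card_range, nsmul_eq_mul]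
    field_simp
  have hexp : (fun ω => (e t ω - g ω) ^ 2)
      = fun ω => (e t ω ^ 2 - 2 * (e t ω * g ω)) + g ω ^ 2 := by
    funext ω; ring
  have hint1 : Integrable (fun ω => e t ω ^ 2) μ := (heL2 t).integrable_sq
  have hint2 : Integrable (fun ω => 2 * (e t ω * g ω)) μ :=
    (aux_integrable_mul (heL2 t) hgL2).const_mul 2
  have hint3 : Integrable (fun ω => g ω ^ 2) μ := hgL2.integrable_sq
  calc ∫ ω, (e t ω - g ω) ^ 2 ∂μ
      = ∫ ω, ((e t ω ^ 2 - 2 * (e t ω * g ω)) + g ω ^ 2) ∂μ := by rw [hexp]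
    _ = (∫ ω, (e t ω ^ 2 - 2 * (e t ω * g ω)) ∂μ) + ∫ ω, g ω ^ 2 ∂μ :=
        integral_add (hint1.sub hint2) hint3
    _ = ((∫ ω, e t ω ^ 2 ∂μ) - ∫ ω, 2 * (e t ω * g ω) ∂μ) + ∫ ω, g ω ^ 2 ∂μ := by
        rw [integral_sub hint1 hint2]
    _ = (σ2 - 2 * (σ2 / T)) + σ2 / T := by
        rw [integral_const_mul, hE2 t, h2, h3]
    _ = ((T : ℝ) - 1) * σ2 / T := by field_simp; ring

/-- In the toy heterogeneous-mean panel model, the plug-in variance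
estimator that omits coefficient heterogeneity,
`V̂_under = (1/(N²T²))ΣΣ (y_{it} − β̂_i)²` with `y_{it} = β_i + e_{it}`, satisfies
`E[V̂_under] = (T−1)σ²/(N·T²)` and `Var(θ̂) − E[V̂_under] = v/N + σ²/(N·T²)`;
in particular it under-estimates the true variance by at least `v/N` when `v > 0`. -/
theorem toy_model_plug_in_underestimates_variance
    {Ω : Type*} [MeasurableSpace Ω] (μ : Measure Ω) [IsProbabilityMeasure μ]
    (θ v σ2 : ℝ) (hv : 0 ≤ v)
    (β : ℕ → Ω → ℝ) (e : ℕ → ℕ → Ω → ℝ)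
    (hβmeas : ∀ i, Measurable (β i)) (hemeas : ∀ i t, Measurable (e i t))
    (hβL2 : ∀ i, MemLp (β i) 2 μ) (heL2 : ∀ i t, MemLp (e i t) 2 μ)
    (hβid : ∀ i, IdentDistrib (β i) (β 0) μ μ)
    (heid : ∀ i t, IdentDistrib (e i t) (e 0 0) μ μ)
    (hβmean : ∀ i, ∫ ω, β i ω ∂μ = θ)
    (hβvar : ∀ i, variance (β i) μ = v)
    (hemean : ∀ i t, ∫ ω, e i t ω ∂μ = 0)
    (hevar : ∀ i t, variance (e i t) μ = σ2)
    (hindep : iIndepFun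
      (Sum.elim β (fun p : ℕ × ℕ => e p.1 p.2)) μ)
    (N T : ℕ) (hN : 1 ≤ N) (hT : 1 ≤ T)
    (y : ℕ → ℕ → Ω → ℝ) (hy : ∀ i t ω, y i t ω = β i ω + e i t ω)
    (βhat : ℕ → Ω → ℝ)
    (hβhat : ∀ i ω, βhat i ω = β i ω + (1 / T : ℝ) * ∑ t ∈ Finset.range T, e i t ω)
    (θhat : Ω → ℝ)
    (hθhat : ∀ ω, θhat ω = (1 / N : ℝ) * ∑ i ∈ Finset.range N, βhat i ω)
    (Vunder : Ω → ℝ)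
    (hVunder : ∀ ω, Vunder ω
      = (1 / ((N : ℝ) ^ 2 * (T : ℝ) ^ 2)) * ∑ i ∈ Finset.range N,
          ∑ t ∈ Finset.range T, (y i t ω - βhat i ω) ^ 2) :
    (∫ ω, Vunder ω ∂μ = ((T : ℝ) - 1) * σ2 / (N * (T : ℝ) ^ 2))
    ∧ (variance θhat μ - ∫ ω, Vunder ω ∂μ = v / N + σ2 / (N * (T : ℝ) ^ 2))
    ∧ (0 < v → (∫ ω, Vunder ω ∂μ) + v / N ≤ variance θhat μ) := by
  have hN0 : (N : ℝ) ≠ 0 := by positivity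
  have hT0 : (T : ℝ) ≠ 0 := by positivity
  have hσ2 : 0 ≤ σ2 := by rw [← hevar 0 0]; exact variance_nonneg _ _
  have hint : ∀ i t, Integrable (e i t) μ := fun i t => (heL2 i t).integrable one_le_two
  -- second moments
  have hE2 : ∀ i t, ∫ ω, e i t ω ^ 2 ∂μ = σ2 := by
    intro i t
    have h := variance_eq_sub (heL2 i t)
    rw [hevar i t] at h
    simp only [Pi.pow_apply] at h
    rw [hemean i t] at h
    linarith
  -- cross moments vanish
  have hcross : ∀ i t j s, ((i, t) : ℕ × ℕ) ≠ (j, s) →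
      ∫ ω, e i t ω * e j s ω ∂μ = 0 := by
    intro i t j s h
    have hne : (Sum.inr (i, t) : ℕ ⊕ ℕ × ℕ) ≠ Sum.inr (j, s) := by simpa using h
    have hid := hindep.indepFun hne
    have h0 : IndepFun (e i t) (e j s) μ := hid
    have := IndepFun.integral_mul_eq_mul_integral h0 (hint i t).aestronglyMeasurable
      (hint j s).aestronglyMeasurable
    calc ∫ ω, e i t ω * e j s ω ∂μ = integral μ (e i t * e j s) := rfl
      _ = (∫ ω, e i t ω ∂μ) * ∫ ω, e j s ω ∂μ := this
      _ = 0 := by rw [hemean i t, hemean j s, mul_zero]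
  -- Part 1 : expectation of Vunder
  have part1 : ∫ ω, Vunder ω ∂μ = ((T : ℝ) - 1) * σ2 / (N * (T : ℝ) ^ 2) := by
    have hVeq : Vunder = fun ω => (1 / ((N : ℝ) ^ 2 * (T : ℝ) ^ 2)) *
        ∑ i ∈ Finset.range N, ∑ t ∈ Finset.range T,
          (e i t ω - (1 / T : ℝ) * ∑ s ∈ Finset.range T, e i s ω) ^ 2 := by
      funext ω
      rw [hVunder ω]
      congr 1
      refine Finset.sum_congr rfl fun i _ => Finset.sum_congr rfl fun t _ => ?_
      rw [hy, hβhat]; ring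
    have hsqint : ∀ i t, Integrable
        (fun ω => (e i t ω - (1 / T : ℝ) * ∑ s ∈ Finset.range T, e i s ω) ^ 2) μ := by
      intro i t
      exact ((heL2 i t).sub (aux_memL2_avg (fun s => heL2 i s))).integrable_sq
    have hinner : ∀ i ∈ Finset.range N,
        (∫ ω, ∑ t ∈ Finset.range T,
          (e i t ω - (1 / T : ℝ) * ∑ s ∈ Finset.range T, e i s ω) ^ 2 ∂μ)
          = (T : ℝ) * (((T : ℝ) - 1) * σ2 / T) := by
      intro i _
      rw [integral_finset_sum _ (fun t _ => hsqint i t)]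
      have : ∀ t ∈ Finset.range T,
          (∫ ω, (e i t ω - (1 / T : ℝ) * ∑ s ∈ Finset.range T, e i s ω) ^ 2 ∂μ)
            = ((T : ℝ) - 1) * σ2 / T := by
        intro t ht
        exact aux_key μ σ2 T hT (e i) (fun s => heL2 i s) (fun s => hE2 i s)
          (fun s r hsr => hcross i s i r (by simp [hsr])) ht
      rw [Finset.sum_congr rfl this, Finset.sum_const, Finset.card_range, nsmul_eq_mul]
    calc ∫ ω, Vunder ω ∂μ
        = (1 / ((N : ℝ) ^ 2 * (T : ℝ) ^ 2)) * ∫ ω, ∑ i ∈ Finset.range N,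
            ∑ t ∈ Finset.range T,
              (e i t ω - (1 / T : ℝ) * ∑ s ∈ Finset.range T, e i s ω) ^ 2 ∂μ := by
          simp only [hVeq]; rw [integral_const_mul]
      _ = (1 / ((N : ℝ) ^ 2 * (T : ℝ) ^ 2)) * ∑ i ∈ Finset.range N,
            ∫ ω, ∑ t ∈ Finset.range T,
              (e i t ω - (1 / T : ℝ) * ∑ s ∈ Finset.range T, e i s ω) ^ 2 ∂μ := by
          rw [integral_finset_sum _ (fun i _ => integrable_finset_sum _
            (fun t _ => hsqint i t))]
      _ = (1 / ((N : ℝ) ^ 2 * (T : ℝ) ^ 2)) *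
            ((N : ℝ) * ((T : ℝ) * (((T : ℝ) - 1) * σ2 / T))) := by
          rw [Finset.sum_congr rfl hinner, Finset.sum_const, Finset.card_range,
            nsmul_eq_mul]
      _ = ((T : ℝ) - 1) * σ2 / (N * (T : ℝ) ^ 2) := by field_simp
  -- variance of θhat
  have hvar : variance θhat μ = v / N + σ2 / ((N : ℝ) * T) := by
    set F : ℕ ⊕ ℕ × ℕ → Ω → ℝ :=
      Sum.elim (fun i ω => (1 / N : ℝ) * β i ω)
        (fun p ω => (1 / ((N : ℝ) * T)) * e p.1 p.2 ω) with hF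
    set s : Finset (ℕ ⊕ ℕ × ℕ) :=
      (Finset.range N).disjSum ((Finset.range N) ×ˢ (Finset.range T)) with hs
    have hFindep : iIndepFun F μ := by
      have hcomp := hindep.comp
        (fun j => fun x : ℝ =>
          (Sum.elim (fun _ : ℕ => (1 / N : ℝ)) (fun _ : ℕ × ℕ => 1 / ((N : ℝ) * T)) j) * x)
        (fun j => measurable_id.const_mul _)
      have hFe : F = fun j => (fun x : ℝ =>
          (Sum.elim (fun _ : ℕ => (1 / N : ℝ)) (fun _ : ℕ × ℕ => 1 / ((N : ℝ) * T)) j) * x)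
            ∘ (Sum.elim β (fun p : ℕ × ℕ => e p.1 p.2)) j := by
        funext j ω; cases j <;> rfl
      rw [hFe]; exact hcomp
    have hFL2 : ∀ j, MemLp (F j) 2 μ := by
      rintro (i | p)
      · exact (hβL2 i).const_mul _
      · exact (heL2 p.1 p.2).const_mul _
    have hθsum : θhat = ∑ j ∈ s, F j := by
      funext ω
      rw [hθhat ω, Finset.sum_apply, hs, Finset.sum_disjSum]
      simp only [hF, Sum.elim_inl, Sum.elim_inr]
      rw [Finset.sum_product]
      have hb : ∀ i ∈ Finset.range N,
          βhat i ω = β i ω + (1 / T : ℝ) * ∑ t ∈ Finset.range T, e i t ω :=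
        fun i _ => hβhat i ω
      rw [Finset.sum_congr rfl hb, Finset.mul_sum, ← Finset.sum_add_distrib]
      refine Finset.sum_congr rfl fun i _ => ?_
      rw [mul_add]
      congr 1
      rw [Finset.mul_sum, Finset.mul_sum]
      exact Finset.sum_congr rfl fun t _ => by ring
    have hvsum : variance θhat μ = ∑ j ∈ s, variance (F j) μ := by
      rw [hθsum]
      exact IndepFun.variance_sum (fun j _ => hFL2 j)
        (fun j _ k _ hjk => hFindep.indepFun hjk)
    rw [hvsum, hs, Finset.sum_disjSum]
    have h1 : ∀ i ∈ Finset.range N,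
        variance (F (Sum.inl i)) μ = (1 / N : ℝ) ^ 2 * v := by
      intro i _
      have : variance (fun ω => (1 / N : ℝ) * β i ω) μ = (1 / N : ℝ) ^ 2 * v := by
        rw [variance_const_mul, hβvar]
      exact this
    have h2 : ∀ p ∈ (Finset.range N) ×ˢ (Finset.range T),
        variance (F (Sum.inr p)) μ = (1 / ((N : ℝ) * T)) ^ 2 * σ2 := by
      intro p _
      have : variance (fun ω => (1 / ((N : ℝ) * T)) * e p.1 p.2 ω) μ
          = (1 / ((N : ℝ) * T)) ^ 2 * σ2 := by
        rw [variance_const_mul, hevar]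
      exact this
    rw [Finset.sum_congr rfl h1, Finset.sum_congr rfl h2, Finset.sum_const,
      Finset.sum_const, Finset.card_range, Finset.card_product, Finset.card_range,
      Finset.card_range, nsmul_eq_mul, nsmul_eq_mul, Nat.cast_mul]
    field_simp
  -- conclusion
  have part2 : variance θhat μ - ∫ ω, Vunder ω ∂μ = v / N + σ2 / (N * (T : ℝ) ^ 2) := by
    rw [hvar, part1]
    field_simp
    ring
  refine ⟨part1, part2, fun _ => ?_⟩
  have hpos : 0 ≤ σ2 / ((N : ℝ) * (T : ℝ) ^ 2) := by positivity
  linarith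
end

section
/- Uniform ratio consistency of the adaptive (cross-sectional bootstrap) variance estimator: suppose for each N ≥ 1, (β^{(N)}_i)_{1≤i≤N} are i.i.d. real random variables with mean θ, variance v_N ∈ [0, C], and fourth central moment E(β^{(N)}_i − θ)⁴ ≤ K·v_N² for fixed constants C ≥ 0 and K ≥ 1; (e_{i,t})_{i,t≥1} are i.i.d. with mean 0, variance σ² > 0 and E[e_{1,1}⁴] < ∞; the family {β^{(N)}_i} ∪ {e_{i,t}} is mutually independent for each N; and T_N ≥ 1 is arbitrary. Let β̂_i = β^{(N)}_i + (1/T_N)Σ_{t=1}^{T_N} e_{i,t}, θ̂_N = (1/N)Σ_{i=1}^N β̂_i, V̂_N = (1/N²)Σ_{i=1}^N (β̂_i − θ̂_N)², and Var_N = v_N/N + σ²/(N·T_N). Then V̂_N/Var_N converges to 1 in probability as N → ∞, i.e. for every ε > 0, P(|V̂_N/Var_N − 1| > ε) → 0, uniformly adapting to any degree of heterogeneity v_N ∈ [0, C]. -/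
open MeasureTheory ProbabilityTheory Filter Finset
open scoped ENNReal NNReal

section Helpers

variable {Ω : Type*} [MeasurableSpace Ω] {μ : Measure Ω}

lemma aux_memLp4 [IsProbabilityMeasure μ] {f : Ω → ℝ}
    (hf : AEStronglyMeasurable f μ) (h : Integrable (fun ω => f ω ^ 4) μ) :
    MemLp f 4 μ := by
  rw [← memLp_one_iff_integrable] at h
  refine (memLp_norm_rpow_iff hf (q := 4) (by norm_num) (by norm_num) (p := 4)).mp ?_
  have h1 : ((4 : ℝ≥0∞) / 4) = 1 := ENNReal.div_self (by norm_num) (by norm_num)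
  have h2 : (fun x => ‖f x‖ ^ (4 : ℝ≥0∞).toReal) = fun ω => f ω ^ 4 := by
    funext x
    rw [show ((4:ℝ≥0∞)).toReal = ((4:ℕ):ℝ) by norm_num, Real.rpow_natCast,
      Real.norm_eq_abs, Even.pow_abs ⟨2, rfl⟩]
  rw [h1, h2]
  exact h

lemma aux_integrable_pow [IsProbabilityMeasure μ] {f : Ω → ℝ}
    (hf : MemLp f 4 μ) {k : ℕ} (hk : 1 ≤ k) (hk4 : k ≤ 4) :
    Integrable (fun ω => f ω ^ k) μ := by
  have hkk : ((k : ℝ≥0∞)) ≤ 4 := by exact_mod_cast hk4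
  have hfk : MemLp f k μ := hf.mono_exponent hkk
  have h0 : (k : ℝ≥0∞) ≠ 0 := by exact_mod_cast (by omega : k ≠ 0)
  have hint := hfk.integrable_norm_rpow h0 (by simp)
  refine hint.mono' ?_ ?_
  · exact (hf.aestronglyMeasurable.aemeasurable.pow_const k).aestronglyMeasurable
  · refine Filter.Eventually.of_forall fun ω => ?_
    simp [Real.norm_eq_abs, abs_pow, ENNReal.toReal_natCast, Real.rpow_natCast]

lemma aux_memLp2_sq [IsProbabilityMeasure μ] {f : Ω → ℝ} (hf : MemLp f 4 μ) :
    MemLp (fun ω => f ω ^ 2) 2 μ := by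
  refine (memLp_two_iff_integrable_sq ?_).mpr ?_
  · exact (hf.aestronglyMeasurable.aemeasurable.pow_const 2).aestronglyMeasurable
  · have := aux_integrable_pow hf (k := 4) (by norm_num) (by norm_num)
    have h : (fun ω => (f ω ^ 2) ^ 2) = fun ω => f ω ^ 4 := by
      funext ω; ring
    rwa [h]

lemma aux_indepFun_weighted_sums {ι : Type*} {F : ι → Ω → ℝ}
    (h : iIndepFun (m := fun _ : ι => (inferInstance : MeasurableSpace ℝ)) F μ)
    (hmeas : ∀ i, Measurable (F i)) (S₁ S₂ : Finset ι) (hd : Disjoint S₁ S₂) (w₁ w₂ : ι → ℝ) :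
    IndepFun (fun ω => ∑ j ∈ S₁, w₁ j * F j ω) (fun ω => ∑ j ∈ S₂, w₂ j * F j ω) μ := by
  have h2 := h.indepFun_finset S₁ S₂ hd hmeas
  have hφ : Measurable (fun v : ↥S₁ → ℝ => ∑ j : ↥S₁, w₁ j.1 * v j) :=
    Finset.measurable_sum _ fun j _ => (measurable_pi_apply j).const_mul _
  have hψ : Measurable (fun v : ↥S₂ → ℝ => ∑ j : ↥S₂, w₂ j.1 * v j) :=
    Finset.measurable_sum _ fun j _ => (measurable_pi_apply j).const_mul _
  have h3 := h2.comp hφ hψ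
  convert h3 using 1
  · funext ω; exact (Finset.sum_coe_sort S₁ fun j => w₁ j * F j ω).symm
  · funext ω; exact (Finset.sum_coe_sort S₂ fun j => w₂ j * F j ω).symm



lemma aux_iid_sum_moments [IsProbabilityMeasure μ] (c : ℕ → Ω → ℝ)
    (hL4 : ∀ t, MemLp (c t) 4 μ)
    (hmean : ∀ t, ∫ ω, c t ω ∂μ = 0) (m2 m4 : ℝ)
    (h2 : ∀ t, ∫ ω, c t ω ^ 2 ∂μ = m2) (h4 : ∀ t, ∫ ω, c t ω ^ 4 ∂μ = m4)
    (hind : ∀ T : ℕ, IndepFun (fun ω => ∑ t ∈ Finset.range T, c t ω) (c T) μ) :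
    ∀ T : ℕ, (∫ ω, (∑ t ∈ Finset.range T, c t ω) ∂μ = 0) ∧
      (∫ ω, (∑ t ∈ Finset.range T, c t ω) ^ 2 ∂μ = T * m2) ∧
      (∫ ω, (∑ t ∈ Finset.range T, c t ω) ^ 4 ∂μ
        = T * m4 + 3 * T * ((T : ℝ) - 1) * m2 ^ 2) := by
  intro T
  induction T with
  | zero => simp
  | succ T ih =>
    obtain ⟨ih1, ih2, ih4⟩ := ih
    set S : Ω → ℝ := fun ω => ∑ t ∈ Finset.range T, c t ω with hS
    have hS4 : MemLp S 4 μ := memLp_finset_sum (Finset.range T) (fun t _ => hL4 t)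
    have hb4 : MemLp (c T) 4 μ := hL4 T
    have iS1 : Integrable S μ := hS4.integrable (by norm_num)
    have ib1 : Integrable (c T) μ := hb4.integrable (by norm_num)
    have iS2 : Integrable (fun ω => S ω ^ 2) μ := aux_integrable_pow hS4 (by norm_num) (by norm_num)
    have iS3 : Integrable (fun ω => S ω ^ 3) μ := aux_integrable_pow hS4 (by norm_num) (by norm_num)
    have iS4 : Integrable (fun ω => S ω ^ 4) μ := aux_integrable_pow hS4 (by norm_num) (by norm_num)
    have ib2 : Integrable (fun ω => c T ω ^ 2) μ := aux_integrable_pow hb4 (by norm_num) (by norm_num)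
    have ib3 : Integrable (fun ω => c T ω ^ 3) μ := aux_integrable_pow hb4 (by norm_num) (by norm_num)
    have ib4 : Integrable (fun ω => c T ω ^ 4) μ := aux_integrable_pow hb4 (by norm_num) (by norm_num)
    have hSb : IndepFun S (c T) μ := hind T
    have I31 : IndepFun (fun ω => S ω ^ 3) (c T) μ :=
      hSb.comp (measurable_id.pow_const 3) measurable_id
    have I22 : IndepFun (fun ω => S ω ^ 2) (fun ω => c T ω ^ 2) μ :=
      hSb.comp (measurable_id.pow_const 2) (measurable_id.pow_const 2)
    have I13 : IndepFun S (fun ω => c T ω ^ 3) μ :=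
      hSb.comp measurable_id (measurable_id.pow_const 3)
    -- products integrable
    have iP11 : Integrable (fun ω => S ω * c T ω) μ := hSb.integrable_mul iS1 ib1
    have iP31 : Integrable (fun ω => S ω ^ 3 * c T ω) μ := I31.integrable_mul iS3 ib1
    have iP22 : Integrable (fun ω => S ω ^ 2 * c T ω ^ 2) μ := I22.integrable_mul iS2 ib2
    have iP13 : Integrable (fun ω => S ω * c T ω ^ 3) μ := I13.integrable_mul iS1 ib3
    -- product values
    have v11 : ∫ ω, S ω * c T ω ∂μ = 0 := by
      have := hSb.integral_mul_eq_mul_integral iS1.aestronglyMeasurable ib1.aestronglyMeasurable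
      simpa [ih1, hmean T] using this
    have v31 : ∫ ω, S ω ^ 3 * c T ω ∂μ = 0 := by
      have := I31.integral_mul_eq_mul_integral iS3.aestronglyMeasurable ib1.aestronglyMeasurable
      simpa [hmean T] using this
    have v22 : ∫ ω, S ω ^ 2 * c T ω ^ 2 ∂μ = (T : ℝ) * m2 * m2 := by
      have := I22.integral_mul_eq_mul_integral iS2.aestronglyMeasurable ib2.aestronglyMeasurable
      simpa [show (∫ ω, S ω ^ 2 ∂μ) = (T:ℝ) * m2 from ih2, h2 T] using this
    have v13 : ∫ ω, S ω * c T ω ^ 3 ∂μ = 0 := by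
      have := I13.integral_mul_eq_mul_integral iS1.aestronglyMeasurable ib3.aestronglyMeasurable
      simpa [ih1] using this
    have hsum : ∀ ω, ∑ t ∈ Finset.range (T + 1), c t ω = S ω + c T ω := fun ω =>
      Finset.sum_range_succ _ _
    refine ⟨?_, ?_, ?_⟩
    · have : ∫ ω, (∑ t ∈ Finset.range (T + 1), c t ω) ∂μ = ∫ ω, (S ω + c T ω) ∂μ :=
        integral_congr_ae (Filter.Eventually.of_forall fun ω => hsum ω)
      rw [this, integral_add iS1 ib1, ih1, hmean T, add_zero]
    · have e1 : ∫ ω, (∑ t ∈ Finset.range (T + 1), c t ω) ^ 2 ∂μ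
          = ∫ ω, (S ω ^ 2 + (2 * (S ω * c T ω) + c T ω ^ 2)) ∂μ := by
        refine integral_congr_ae (Filter.Eventually.of_forall fun ω => ?_)
        simp only [hsum]; ring
      have E1 : ∫ ω, (S ω ^ 2 + (2 * (S ω * c T ω) + c T ω ^ 2)) ∂μ
          = (∫ ω, S ω ^ 2 ∂μ) + ∫ ω, (2 * (S ω * c T ω) + c T ω ^ 2) ∂μ :=
        integral_add iS2 ((iP11.const_mul 2).add ib2)
      have E2 : ∫ ω, (2 * (S ω * c T ω) + c T ω ^ 2) ∂μ
          = (∫ ω, 2 * (S ω * c T ω) ∂μ) + ∫ ω, c T ω ^ 2 ∂μ :=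
        integral_add (iP11.const_mul 2) ib2
      have E3 : ∫ ω, 2 * (S ω * c T ω) ∂μ = 2 * ∫ ω, S ω * c T ω ∂μ :=
        integral_const_mul _ _
      rw [e1, E1, E2, E3, v11, ih2, h2 T]
      push_cast
      ring
    · have e1 : ∫ ω, (∑ t ∈ Finset.range (T + 1), c t ω) ^ 4 ∂μ
          = ∫ ω, (S ω ^ 4 + (4 * (S ω ^ 3 * c T ω) + (6 * (S ω ^ 2 * c T ω ^ 2)
              + (4 * (S ω * c T ω ^ 3) + c T ω ^ 4)))) ∂μ := by
        refine integral_congr_ae (Filter.Eventually.of_forall fun ω => ?_)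
        simp only [hsum]; ring
      have E1 : ∫ ω, (S ω ^ 4 + (4 * (S ω ^ 3 * c T ω) + (6 * (S ω ^ 2 * c T ω ^ 2)
              + (4 * (S ω * c T ω ^ 3) + c T ω ^ 4)))) ∂μ
          = (∫ ω, S ω ^ 4 ∂μ) + ∫ ω, (4 * (S ω ^ 3 * c T ω) + (6 * (S ω ^ 2 * c T ω ^ 2)
              + (4 * (S ω * c T ω ^ 3) + c T ω ^ 4))) ∂μ :=
        integral_add iS4 ((iP31.const_mul 4).add ((iP22.const_mul 6).add
          ((iP13.const_mul 4).add ib4)))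
      have E2 : ∫ ω, (4 * (S ω ^ 3 * c T ω) + (6 * (S ω ^ 2 * c T ω ^ 2)
              + (4 * (S ω * c T ω ^ 3) + c T ω ^ 4))) ∂μ
          = (∫ ω, 4 * (S ω ^ 3 * c T ω) ∂μ) + ∫ ω, (6 * (S ω ^ 2 * c T ω ^ 2)
              + (4 * (S ω * c T ω ^ 3) + c T ω ^ 4)) ∂μ :=
        integral_add (iP31.const_mul 4) ((iP22.const_mul 6).add ((iP13.const_mul 4).add ib4))
      have E3 : ∫ ω, (6 * (S ω ^ 2 * c T ω ^ 2) + (4 * (S ω * c T ω ^ 3) + c T ω ^ 4)) ∂μ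
          = (∫ ω, 6 * (S ω ^ 2 * c T ω ^ 2) ∂μ)
            + ∫ ω, (4 * (S ω * c T ω ^ 3) + c T ω ^ 4) ∂μ :=
        integral_add (iP22.const_mul 6) ((iP13.const_mul 4).add ib4)
      have E4 : ∫ ω, (4 * (S ω * c T ω ^ 3) + c T ω ^ 4) ∂μ
          = (∫ ω, 4 * (S ω * c T ω ^ 3) ∂μ) + ∫ ω, c T ω ^ 4 ∂μ :=
        integral_add (iP13.const_mul 4) ib4
      have F1 : ∫ ω, 4 * (S ω ^ 3 * c T ω) ∂μ = 4 * ∫ ω, S ω ^ 3 * c T ω ∂μ :=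
        integral_const_mul _ _
      have F2 : ∫ ω, 6 * (S ω ^ 2 * c T ω ^ 2) ∂μ = 6 * ∫ ω, S ω ^ 2 * c T ω ^ 2 ∂μ :=
        integral_const_mul _ _
      have F3 : ∫ ω, 4 * (S ω * c T ω ^ 3) ∂μ = 4 * ∫ ω, S ω * c T ω ^ 3 ∂μ :=
        integral_const_mul _ _
      rw [e1, E1, E2, E3, E4, F1, F2, F3, v31, v22, v13, ih4, h4 T]
      push_cast
      ring


end Helpers

set_option maxHeartbeats 1000000 in
/-- Uniform ratio consistency of the adaptive (cross-sectional
bootstrap) variance estimator: in the triangular-array toy panel model with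
`v_N ∈ [0, C]`, `E(β^{(N)}_i − θ)⁴ ≤ K·v_N²`, `σ² > 0`, `E[e⁴] < ∞` and arbitrary
`T_N ≥ 1`, the ratio `V̂_N / Var_N` converges to `1` in probability, where
`Var_N = v_N/N + σ²/(N·T_N)`. -/
theorem toy_model_adaptive_variance_ratio_consistency
    {Ω : Type*} [MeasurableSpace Ω] (μ : Measure Ω) [IsProbabilityMeasure μ]
    (θ σ2 C K : ℝ) (hσ2 : 0 < σ2) (hC : 0 ≤ C) (hK : 1 ≤ K)
    (v : ℕ → ℝ) (hv : ∀ N, v N ∈ Set.Icc 0 C)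
    (β : ℕ → ℕ → Ω → ℝ) (e : ℕ → ℕ → Ω → ℝ)
    (hβmeas : ∀ N i, Measurable (β N i)) (hemeas : ∀ i t, Measurable (e i t))
    (hβid : ∀ N i, IdentDistrib (β N i) (β N 0) μ μ)
    (heid : ∀ i t, IdentDistrib (e i t) (e 0 0) μ μ)
    (hβint4 : ∀ N i, Integrable (fun ω => (β N i ω - θ) ^ 4) μ)
    (hβmean : ∀ N i, ∫ ω, β N i ω ∂μ = θ)
    (hβvar : ∀ N i, variance (β N i) μ = v N)
    (hβ4 : ∀ N i, ∫ ω, (β N i ω - θ) ^ 4 ∂μ ≤ K * (v N) ^ 2)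
    (hemean : ∀ i t, ∫ ω, e i t ω ∂μ = 0)
    (hevar : ∀ i t, variance (e i t) μ = σ2)
    (he4 : ∀ i t, Integrable (fun ω => (e i t ω) ^ 4) μ)
    (hindep : ∀ N, iIndepFun (m := fun _ : ℕ ⊕ ℕ × ℕ => (inferInstance : MeasurableSpace ℝ))
      (Sum.elim (β N) (fun p : ℕ × ℕ => e p.1 p.2)) μ)
    (T : ℕ → ℕ) (hT1 : ∀ N, 1 ≤ T N)
    (βhat : ℕ → ℕ → Ω → ℝ)
    (hβhat : ∀ N i ω, βhat N i ω
      = β N i ω + (1 / (T N) : ℝ) * ∑ t ∈ Finset.range (T N), e i t ω)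
    (θhat : ℕ → Ω → ℝ)
    (hθhat : ∀ N ω, θhat N ω = (1 / N : ℝ) * ∑ i ∈ Finset.range N, βhat N i ω)
    (Vhat : ℕ → Ω → ℝ)
    (hVhat : ∀ N ω, Vhat N ω
      = (1 / (N : ℝ) ^ 2) * ∑ i ∈ Finset.range N, (βhat N i ω - θhat N ω) ^ 2)
    (VarN : ℕ → ℝ)
    (hVarN : ∀ N, VarN N = v N / N + σ2 / ((N : ℝ) * (T N : ℝ))) :
    ∀ ε > (0 : ℝ),
      Tendsto (fun N : ℕ => μ {ω | ε < |Vhat N ω / VarN N - 1|}) atTop (nhds 0) := by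
  intro ε hε
  have hK0 : (0:ℝ) < K := lt_of_lt_of_le one_pos hK
  have hm4e0 : (0:ℝ) ≤ ∫ ω, e 0 0 ω ^ 4 ∂μ := integral_nonneg fun ω => by positivity
  set m4e : ℝ := ∫ ω, e 0 0 ω ^ 4 ∂μ with hm4edef
  set ce : ℝ := (m4e + 3 * σ2 ^ 2) / σ2 ^ 2 with hcedef
  have hce0 : 0 ≤ ce := by positivity
  set L : ℝ := K + 6 + ce with hLdef
  have hL0 : 0 < L := by linarith
  set Cb : ℝ := 4 * L / ε ^ 2 + 2 / ε with hCbdef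
  have key : ∀ N : ℕ, 1 ≤ N →
      μ {ω | ε < |Vhat N ω / VarN N - 1|} ≤ ENNReal.ofReal (Cb / N) := by
    intro N hN1
    have hNR : (0:ℝ) < N := by exact_mod_cast hN1
    have hTn1 : 1 ≤ T N := hT1 N
    have hTnR : (0:ℝ) < T N := by exact_mod_cast hTn1
    have hTnR1 : (1:ℝ) ≤ T N := by exact_mod_cast hTn1
    have hv0 : 0 ≤ v N := (hv N).1
    set q : ℝ := σ2 / T N with hqdef
    have hq0 : 0 < q := div_pos hσ2 hTnR
    set s2 : ℝ := v N + q with hs2def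
    have hs20 : 0 < s2 := by linarith
    have hVar : VarN N = s2 / N := by
      rw [hVarN N, hs2def, hqdef]
      field_simp
    -- measurability of the combined family
    have hFmeas : ∀ j : ℕ ⊕ ℕ × ℕ,
        Measurable ((Sum.elim (β N) fun p : ℕ × ℕ => e p.1 p.2) j) := by
      rintro (i | ⟨i, t⟩)
      · exact hβmeas N i
      · exact hemeas i t
    -- centered estimated coefficients and their two independent parts
    set X : ℕ → Ω → ℝ :=
      fun i ω => β N i ω + (1 / (T N : ℝ)) * ∑ t ∈ Finset.range (T N), e i t ω - θ with hXdef
    set Af : ℕ → Ω → ℝ := fun i ω => β N i ω - θ with hAdef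
    set Bf : ℕ → Ω → ℝ :=
      fun i ω => (1 / (T N : ℝ)) * ∑ t ∈ Finset.range (T N), e i t ω with hBdef
    have hXhat : ∀ i ω, βhat N i ω = X i ω + θ := by
      intro i ω; rw [hβhat]; simp [hXdef]
    have hXAB : ∀ i ω, X i ω = Af i ω + Bf i ω := by
      intro i ω; simp [hXdef, hAdef, hBdef]; ring
    -- MemLp facts
    have heL4 : ∀ i t, MemLp (e i t) 4 μ := fun i t =>
      aux_memLp4 (hemeas i t).aestronglyMeasurable (he4 i t)
    have hAL4 : ∀ i, MemLp (Af i) 4 μ := fun i =>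
      aux_memLp4 ((hβmeas N i).sub_const θ).aestronglyMeasurable (hβint4 N i)
    have hBL4 : ∀ i, MemLp (Bf i) 4 μ := fun i =>
      (memLp_finset_sum (Finset.range (T N)) fun t _ => heL4 i t).const_mul _
    have hXL4 : ∀ i, MemLp (X i) 4 μ := by
      intro i
      have h := (hAL4 i).add (hBL4 i)
      have heq : X i = Af i + Bf i := by
        funext ω; rw [hXAB i ω]; rfl
      rwa [heq]
    have hXint : ∀ i, Integrable (X i) μ := fun i => (hXL4 i).integrable (by norm_num)
    have hX2L : ∀ i, MemLp (X i) 2 μ := fun i => (hXL4 i).mono_exponent (by norm_num)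
    have hAint : ∀ i, Integrable (Af i) μ := fun i => (hAL4 i).integrable (by norm_num)
    have hBint : ∀ i, Integrable (Bf i) μ := fun i => (hBL4 i).integrable (by norm_num)
    -- moments of the errors
    have he2 : ∀ i t, ∫ ω, e i t ω ^ 2 ∂μ = σ2 := by
      intro i t
      have hL2 : MemLp (e i t) 2 μ := (heL4 i t).mono_exponent (by norm_num)
      have hvd := variance_eq_sub hL2
      rw [hevar i t, hemean i t] at hvd
      simpa using hvd.symm
    have he4eq : ∀ i t, ∫ ω, e i t ω ^ 4 ∂μ = m4e := by
      intro i t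
      have hid : IdentDistrib (fun ω => e i t ω ^ 4) (fun ω => e 0 0 ω ^ 4) μ μ :=
        (heid i t).comp (measurable_id.pow_const 4)
      rw [hm4edef]
      exact hid.integral_eq
    -- independence of partial e-sums with the next term
    have hesum_indep : ∀ i (T' : ℕ),
        IndepFun (fun ω => ∑ t ∈ Finset.range T', e i t ω) (e i T') μ := by
      intro i T'
      have hdisj : Disjoint ((Finset.range T').image fun t => (Sum.inr (i, t) : ℕ ⊕ ℕ × ℕ))
          {(Sum.inr (i, T') : ℕ ⊕ ℕ × ℕ)} := by
        simp only [Finset.disjoint_singleton_right, Finset.mem_image, Finset.mem_range,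
          not_exists]
        rintro t ⟨ht, hEq⟩
        have : t = T' := by simpa using hEq
        omega
      have h := aux_indepFun_weighted_sums (hindep N) hFmeas _ _ hdisj
        (fun _ => (1:ℝ)) (fun _ => (1:ℝ))
      convert h using 1
      · funext ω
        rw [Finset.sum_image (fun a _ b _ h => by simpa using h)]
        simp
      · funext ω
        simp
    -- moments of e-sums
    have hmom : ∀ i, (∫ ω, (∑ t ∈ Finset.range (T N), e i t ω) ∂μ = 0) ∧
        (∫ ω, (∑ t ∈ Finset.range (T N), e i t ω) ^ 2 ∂μ = (T N) * σ2) ∧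
        (∫ ω, (∑ t ∈ Finset.range (T N), e i t ω) ^ 4 ∂μ
          = (T N) * m4e + 3 * (T N) * ((T N : ℝ) - 1) * σ2 ^ 2) := fun i =>
      aux_iid_sum_moments (fun t => e i t) (fun t => heL4 i t) (fun t => hemean i t) σ2 m4e
        (fun t => he2 i t) (fun t => he4eq i t) (hesum_indep i) (T N)
    -- independence of the β-part and the e-part
    have hABindep : ∀ i, IndepFun (Af i) (Bf i) μ := by
      intro i
      have hdisj : Disjoint {(Sum.inl i : ℕ ⊕ ℕ × ℕ)}
          ((Finset.range (T N)).image fun t => (Sum.inr (i, t) : ℕ ⊕ ℕ × ℕ)) := by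
        simp [Finset.disjoint_left]
      have h := aux_indepFun_weighted_sums (hindep N) hFmeas _ _ hdisj
        (fun _ => (1:ℝ)) (fun _ => (1 / (T N : ℝ)))
      have h2 := h.comp (measurable_id.sub_const θ) measurable_id
      have e1 : Af i = (fun x => x - θ) ∘ fun ω =>
          ∑ jj ∈ ({Sum.inl i} : Finset (ℕ ⊕ ℕ × ℕ)),
            (1:ℝ) * (Sum.elim (β N) fun p : ℕ × ℕ => e p.1 p.2) jj ω := by
        funext ω; simp [hAdef]
      have e2 : Bf i = (id : ℝ → ℝ) ∘ fun ω =>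
          ∑ jj ∈ (Finset.range (T N)).image (fun t => (Sum.inr (i, t) : ℕ ⊕ ℕ × ℕ)),
            (1 / (T N : ℝ)) * (Sum.elim (β N) fun p : ℕ × ℕ => e p.1 p.2) jj ω := by
        funext ω
        simp only [Function.comp_apply, id_eq]
        rw [Finset.sum_image (fun a _ b _ h => by simpa using h)]
        simp [hBdef, Finset.mul_sum]
      rw [e1, e2]
      exact h2
    -- moments of the β-part
    have hβInt : ∀ i, Integrable (β N i) μ := by
      intro i
      have h := (hAint i).add (integrable_const θ)
      have heq : (Af i + fun _ => θ) = β N i := by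
        funext ω; simp [hAdef]
      rwa [heq] at h
    have hAmean : ∀ i, ∫ ω, Af i ω ∂μ = 0 := by
      intro i
      have h : ∫ ω, (β N i ω - θ) ∂μ = 0 := by
        rw [integral_sub (hβInt i) (integrable_const θ), hβmean N i, integral_const]
        simp
      simpa [hAdef] using h
    have hA2 : ∀ i, ∫ ω, Af i ω ^ 2 ∂μ = v N := by
      intro i
      have hβ2 : MemLp (β N i) 2 μ := by
        have h := ((hAL4 i).add (memLp_const θ)).mono_exponent
          (p := 2) (q := 4) (by norm_num)
        have heq : (Af i + fun _ => θ) = β N i := by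
          funext ω; simp [hAdef]
        rwa [heq] at h
      have hveq := variance_eq_integral hβ2.aestronglyMeasurable.aemeasurable
      rw [hβvar N i] at hveq
      have hmean' : μ[β N i] = θ := hβmean N i
      rw [hmean'] at hveq
      rw [hveq]
    have hA4bd : ∀ i, ∫ ω, Af i ω ^ 4 ∂μ ≤ K * v N ^ 2 := by
      intro i
      have h := hβ4 N i
      simpa [hAdef] using h
    -- moments of the e-part
    have hBmean : ∀ i, ∫ ω, Bf i ω ∂μ = 0 := by
      intro i
      have h : ∫ ω, ((1 / (T N : ℝ)) * ∑ t ∈ Finset.range (T N), e i t ω) ∂μ = 0 := by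
        rw [integral_const_mul, (hmom i).1, mul_zero]
      simpa [hBdef] using h
    have hB2 : ∀ i, ∫ ω, Bf i ω ^ 2 ∂μ = q := by
      intro i
      have hpt : (fun ω => Bf i ω ^ 2)
          = fun ω => (1 / (T N : ℝ)) ^ 2 * (∑ t ∈ Finset.range (T N), e i t ω) ^ 2 := by
        funext ω; simp [hBdef]; ring
      rw [hpt, integral_const_mul, (hmom i).2.1, hqdef]
      field_simp
    have hB4bd : ∀ i, ∫ ω, Bf i ω ^ 4 ∂μ ≤ ce * q ^ 2 := by
      intro i
      have hpt : (fun ω => Bf i ω ^ 4)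
          = fun ω => (1 / (T N : ℝ)) ^ 4 * (∑ t ∈ Finset.range (T N), e i t ω) ^ 4 := by
        funext ω; simp [hBdef]; ring
      rw [hpt, integral_const_mul, (hmom i).2.2]
      have hceq : ce * q ^ 2 = (m4e + 3 * σ2 ^ 2) / (T N : ℝ) ^ 2 := by
        rw [hcedef, hqdef]
        field_simp
      rw [hceq]
      have h1 : (1 / (T N : ℝ)) ^ 4 * ((T N : ℝ) * m4e + 3 * (T N : ℝ) * ((T N : ℝ) - 1) * σ2 ^ 2)
          = ((T N : ℝ) * m4e + 3 * (T N : ℝ) * ((T N : ℝ) - 1) * σ2 ^ 2) / (T N : ℝ) ^ 4 := by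
        field_simp
      rw [h1, div_le_div_iff₀ (by positivity) (by positivity)]
      nlinarith [mul_nonneg hm4e0 (mul_nonneg (pow_nonneg hTnR.le 3) (sub_nonneg.mpr hTnR1)),
        mul_nonneg (sq_nonneg σ2) (pow_nonneg hTnR.le 3),
        mul_nonneg (mul_nonneg (sq_nonneg σ2) (pow_nonneg hTnR.le 3)) (sub_nonneg.mpr hTnR1)]
    -- moments of X
    have hXmean : ∀ i, ∫ ω, X i ω ∂μ = 0 := by
      intro i
      calc ∫ ω, X i ω ∂μ = ∫ ω, (Af i ω + Bf i ω) ∂μ :=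
            integral_congr_ae (Filter.Eventually.of_forall fun ω => hXAB i ω)
        _ = (∫ ω, Af i ω ∂μ) + ∫ ω, Bf i ω ∂μ := integral_add (hAint i) (hBint i)
        _ = 0 := by rw [hAmean i, hBmean i, add_zero]
    have hX2 : ∀ i, ∫ ω, X i ω ^ 2 ∂μ = s2 := by
      intro i
      have iA2 : Integrable (fun ω => Af i ω ^ 2) μ :=
        aux_integrable_pow (hAL4 i) (by norm_num) (by norm_num)
      have iB2 : Integrable (fun ω => Bf i ω ^ 2) μ :=
        aux_integrable_pow (hBL4 i) (by norm_num) (by norm_num)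
      have iAB : Integrable ((Af i) * (Bf i)) μ :=
        (hABindep i).integrable_mul (hAint i) (hBint i)
      have iAB' : Integrable (fun ω => Af i ω * Bf i ω) μ := iAB
      have vAB : ∫ ω, Af i ω * Bf i ω ∂μ = 0 := by
        have h := (hABindep i).integral_mul_eq_mul_integral (hAint i).aestronglyMeasurable (hBint i).aestronglyMeasurable
        simpa [hAmean i] using h
      have E1 : ∫ ω, (Af i ω ^ 2 + (2 * (Af i ω * Bf i ω) + Bf i ω ^ 2)) ∂μ
          = (∫ ω, Af i ω ^ 2 ∂μ) + ∫ ω, (2 * (Af i ω * Bf i ω) + Bf i ω ^ 2) ∂μ :=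
        integral_add iA2 ((iAB'.const_mul 2).add iB2)
      have E2 : ∫ ω, (2 * (Af i ω * Bf i ω) + Bf i ω ^ 2) ∂μ
          = (∫ ω, 2 * (Af i ω * Bf i ω) ∂μ) + ∫ ω, Bf i ω ^ 2 ∂μ :=
        integral_add (iAB'.const_mul 2) iB2
      have E3 : ∫ ω, 2 * (Af i ω * Bf i ω) ∂μ = 2 * ∫ ω, Af i ω * Bf i ω ∂μ :=
        integral_const_mul _ _
      calc ∫ ω, X i ω ^ 2 ∂μ
          = ∫ ω, (Af i ω ^ 2 + (2 * (Af i ω * Bf i ω) + Bf i ω ^ 2)) ∂μ := by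
            refine integral_congr_ae (Filter.Eventually.of_forall fun ω => ?_)
            simp only [hXAB]; ring
        _ = s2 := by
            rw [E1, E2, E3, vAB, hA2 i, hB2 i, hs2def]
            ring
    have hX4 : ∀ i, ∫ ω, X i ω ^ 4 ∂μ ≤ L * s2 ^ 2 := by
      intro i
      have iA2 : Integrable (fun ω => Af i ω ^ 2) μ :=
        aux_integrable_pow (hAL4 i) (by norm_num) (by norm_num)
      have iA3 : Integrable (fun ω => Af i ω ^ 3) μ :=
        aux_integrable_pow (hAL4 i) (by norm_num) (by norm_num)
      have iA4 : Integrable (fun ω => Af i ω ^ 4) μ :=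
        aux_integrable_pow (hAL4 i) (by norm_num) (by norm_num)
      have iB2 : Integrable (fun ω => Bf i ω ^ 2) μ :=
        aux_integrable_pow (hBL4 i) (by norm_num) (by norm_num)
      have iB3 : Integrable (fun ω => Bf i ω ^ 3) μ :=
        aux_integrable_pow (hBL4 i) (by norm_num) (by norm_num)
      have iB4 : Integrable (fun ω => Bf i ω ^ 4) μ :=
        aux_integrable_pow (hBL4 i) (by norm_num) (by norm_num)
      have I31 : IndepFun (fun ω => Af i ω ^ 3) (Bf i) μ :=
        (hABindep i).comp (measurable_id.pow_const 3) measurable_id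
      have I22 : IndepFun (fun ω => Af i ω ^ 2) (fun ω => Bf i ω ^ 2) μ :=
        (hABindep i).comp (measurable_id.pow_const 2) (measurable_id.pow_const 2)
      have I13 : IndepFun (Af i) (fun ω => Bf i ω ^ 3) μ :=
        (hABindep i).comp measurable_id (measurable_id.pow_const 3)
      have iP31 : Integrable (fun ω => Af i ω ^ 3 * Bf i ω) μ := I31.integrable_mul iA3 (hBint i)
      have iP22 : Integrable (fun ω => Af i ω ^ 2 * Bf i ω ^ 2) μ := I22.integrable_mul iA2 iB2
      have iP13 : Integrable (fun ω => Af i ω * Bf i ω ^ 3) μ := I13.integrable_mul (hAint i) iB3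
      have v31 : ∫ ω, Af i ω ^ 3 * Bf i ω ∂μ = 0 := by
        have h := I31.integral_mul_eq_mul_integral iA3.aestronglyMeasurable (hBint i).aestronglyMeasurable
        simpa [hBmean i] using h
      have v22 : ∫ ω, Af i ω ^ 2 * Bf i ω ^ 2 ∂μ = v N * q := by
        have h := I22.integral_mul_eq_mul_integral iA2.aestronglyMeasurable iB2.aestronglyMeasurable
        simpa [hA2 i, hB2 i] using h
      have v13 : ∫ ω, Af i ω * Bf i ω ^ 3 ∂μ = 0 := by
        have h := I13.integral_mul_eq_mul_integral (hAint i).aestronglyMeasurable iB3.aestronglyMeasurable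
        simpa [hAmean i] using h
      have E1 : ∫ ω, (Af i ω ^ 4 + (4 * (Af i ω ^ 3 * Bf i ω) + (6 * (Af i ω ^ 2 * Bf i ω ^ 2)
              + (4 * (Af i ω * Bf i ω ^ 3) + Bf i ω ^ 4)))) ∂μ
          = (∫ ω, Af i ω ^ 4 ∂μ) + ∫ ω, (4 * (Af i ω ^ 3 * Bf i ω)
              + (6 * (Af i ω ^ 2 * Bf i ω ^ 2)
              + (4 * (Af i ω * Bf i ω ^ 3) + Bf i ω ^ 4))) ∂μ :=
        integral_add iA4 ((iP31.const_mul 4).add ((iP22.const_mul 6).add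
          ((iP13.const_mul 4).add iB4)))
      have E2 : ∫ ω, (4 * (Af i ω ^ 3 * Bf i ω) + (6 * (Af i ω ^ 2 * Bf i ω ^ 2)
              + (4 * (Af i ω * Bf i ω ^ 3) + Bf i ω ^ 4))) ∂μ
          = (∫ ω, 4 * (Af i ω ^ 3 * Bf i ω) ∂μ) + ∫ ω, (6 * (Af i ω ^ 2 * Bf i ω ^ 2)
              + (4 * (Af i ω * Bf i ω ^ 3) + Bf i ω ^ 4)) ∂μ :=
        integral_add (iP31.const_mul 4) ((iP22.const_mul 6).add ((iP13.const_mul 4).add iB4))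
      have E3 : ∫ ω, (6 * (Af i ω ^ 2 * Bf i ω ^ 2) + (4 * (Af i ω * Bf i ω ^ 3)
              + Bf i ω ^ 4)) ∂μ
          = (∫ ω, 6 * (Af i ω ^ 2 * Bf i ω ^ 2) ∂μ)
            + ∫ ω, (4 * (Af i ω * Bf i ω ^ 3) + Bf i ω ^ 4) ∂μ :=
        integral_add (iP22.const_mul 6) ((iP13.const_mul 4).add iB4)
      have E4 : ∫ ω, (4 * (Af i ω * Bf i ω ^ 3) + Bf i ω ^ 4) ∂μ
          = (∫ ω, 4 * (Af i ω * Bf i ω ^ 3) ∂μ) + ∫ ω, Bf i ω ^ 4 ∂μ :=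
        integral_add (iP13.const_mul 4) iB4
      have F1 : ∫ ω, 4 * (Af i ω ^ 3 * Bf i ω) ∂μ = 4 * ∫ ω, Af i ω ^ 3 * Bf i ω ∂μ :=
        integral_const_mul _ _
      have F2 : ∫ ω, 6 * (Af i ω ^ 2 * Bf i ω ^ 2) ∂μ = 6 * ∫ ω, Af i ω ^ 2 * Bf i ω ^ 2 ∂μ :=
        integral_const_mul _ _
      have F3 : ∫ ω, 4 * (Af i ω * Bf i ω ^ 3) ∂μ = 4 * ∫ ω, Af i ω * Bf i ω ^ 3 ∂μ :=
        integral_const_mul _ _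
      have hexp : ∫ ω, X i ω ^ 4 ∂μ
          = (∫ ω, Af i ω ^ 4 ∂μ) + (6 * (v N * q) + ∫ ω, Bf i ω ^ 4 ∂μ) := by
        calc ∫ ω, X i ω ^ 4 ∂μ
            = ∫ ω, (Af i ω ^ 4 + (4 * (Af i ω ^ 3 * Bf i ω) + (6 * (Af i ω ^ 2 * Bf i ω ^ 2)
                + (4 * (Af i ω * Bf i ω ^ 3) + Bf i ω ^ 4)))) ∂μ := by
              refine integral_congr_ae (Filter.Eventually.of_forall fun ω => ?_)
              simp only [hXAB]; ring
          _ = (∫ ω, Af i ω ^ 4 ∂μ) + (6 * (v N * q) + ∫ ω, Bf i ω ^ 4 ∂μ) := by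
              rw [E1, E2, E3, E4, F1, F2, F3, v31, v22, v13]
              ring
      rw [hexp, hLdef, hs2def]
      have h1 := hA4bd i
      have h2 := hB4bd i
      have step1 : (∫ ω, Af i ω ^ 4 ∂μ) + (6 * (v N * q) + ∫ ω, Bf i ω ^ 4 ∂μ)
          ≤ K * v N ^ 2 + (6 * (v N * q) + ce * q ^ 2) :=
        add_le_add h1 (add_le_add_right h2 _)
      refine le_trans step1 ?_
      nlinarith [mul_nonneg hv0 hq0.le, sq_nonneg (v N), sq_nonneg q,
        mul_nonneg hK0.le (mul_nonneg hv0 hq0.le), mul_nonneg hK0.le (sq_nonneg q),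
        mul_nonneg hce0 (mul_nonneg hv0 hq0.le), mul_nonneg hce0 (sq_nonneg (v N))]
    -- variances
    have hvarX : ∀ i, variance (X i) μ = s2 := by
      intro i
      rw [variance_eq_sub (hX2L i)]
      have h1 : μ[X i ^ 2] = s2 := hX2 i
      have h2 : μ[X i] = 0 := hXmean i
      rw [h1, h2]
      simp
    -- pairwise independence of the X i
    have hXpair : ∀ i j, i ≠ j → IndepFun (X i) (X j) μ := by
      intro i j hij
      have hdisj : Disjoint
          (insert (Sum.inl i)
            ((Finset.range (T N)).image fun t => (Sum.inr (i, t) : ℕ ⊕ ℕ × ℕ)))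
          (insert (Sum.inl j)
            ((Finset.range (T N)).image fun t => (Sum.inr (j, t) : ℕ ⊕ ℕ × ℕ))) := by
        simp only [Finset.disjoint_left, Finset.mem_insert, Finset.mem_image, Finset.mem_range]
        rintro a (rfl | ⟨t, ht, rfl⟩) hmem
        · rcases hmem with h | ⟨t', ht', h⟩
          · exact hij (by simpa using h)
          · simp at h
        · rcases hmem with h | ⟨t', ht', h⟩
          · simp at h
          · obtain ⟨hji, -⟩ : j = i ∧ t' = t := by simpa using h
            exact hij hji.symm
      have h := aux_indepFun_weighted_sums (hindep N) hFmeas _ _ hdisj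
        (Sum.elim (fun _ => (1:ℝ)) fun _ => (1 / (T N : ℝ)))
        (Sum.elim (fun _ => (1:ℝ)) fun _ => (1 / (T N : ℝ)))
      have h2 := h.comp (measurable_id.sub_const θ) (measurable_id.sub_const θ)
      have hXeq : ∀ k : ℕ, X k = (fun x => x - θ) ∘ fun ω =>
          ∑ jj ∈ insert (Sum.inl k)
              ((Finset.range (T N)).image fun t => (Sum.inr (k, t) : ℕ ⊕ ℕ × ℕ)),
            (Sum.elim (fun _ => (1:ℝ)) fun _ => (1 / (T N : ℝ))) jj
              * (Sum.elim (β N) fun p : ℕ × ℕ => e p.1 p.2) jj ω := by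
        intro k
        funext ω
        simp only [Function.comp_apply]
        rw [Finset.sum_insert (by simp), Finset.sum_image (fun a _ b _ h => by simpa using h)]
        simp only [Sum.elim_inl, Sum.elim_inr, one_mul]
        rw [← Finset.mul_sum]
      rw [hXeq i, hXeq j]
      exact h2
    have hXpairwise : Set.Pairwise ↑(Finset.range N) fun i j => IndepFun (X i) (X j) μ :=
      fun i _ j _ hij => hXpair i j hij
    have hvarSX : variance (∑ i ∈ Finset.range N, X i) μ = N * s2 := by
      rw [IndepFun.variance_sum (fun i _ => hX2L i) hXpairwise]
      have hc : ∀ i ∈ Finset.range N, variance (X i) μ = s2 := fun i _ => hvarX i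
      rw [Finset.sum_congr rfl hc, Finset.sum_const, Finset.card_range, nsmul_eq_mul]
    -- the squares
    set Y : ℕ → Ω → ℝ := fun i ω => X i ω ^ 2 with hYdef
    have hY2L : ∀ i, MemLp (Y i) 2 μ := fun i => aux_memLp2_sq (hXL4 i)
    have hYint : ∀ i, Integrable (Y i) μ := fun i => (hY2L i).integrable (by norm_num)
    have hYpairwise : Set.Pairwise ↑(Finset.range N) fun i j => IndepFun (Y i) (Y j) μ :=
      fun i _ j _ hij =>
        (hXpair i j hij).comp (measurable_id.pow_const 2) (measurable_id.pow_const 2)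
    have hYmean : ∀ i, μ[Y i] = s2 := fun i => hX2 i
    have hvarY : ∀ i, variance (Y i) μ ≤ L * s2 ^ 2 := by
      intro i
      rw [variance_eq_sub (hY2L i)]
      have h1 : μ[Y i ^ 2] = ∫ ω, X i ω ^ 4 ∂μ := by
        refine integral_congr_ae (Filter.Eventually.of_forall fun ω => ?_)
        show Y i ω ^ 2 = X i ω ^ 4
        simp only [hYdef]
        ring
      rw [h1]
      have h2 := hX4 i
      nlinarith [sq_nonneg (μ[Y i])]
    have hvarSS : variance (∑ i ∈ Finset.range N, Y i) μ ≤ N * (L * s2 ^ 2) := by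
      rw [IndepFun.variance_sum (fun i _ => hY2L i) hYpairwise]
      calc ∑ i ∈ Finset.range N, variance (Y i) μ
          ≤ ∑ _i ∈ Finset.range N, (L * s2 ^ 2) := Finset.sum_le_sum fun i _ => hvarY i
        _ = N * (L * s2 ^ 2) := by
            rw [Finset.sum_const, Finset.card_range, nsmul_eq_mul]
    -- means of the sums
    have hSXmean : μ[∑ i ∈ Finset.range N, X i] = 0 := by
      have h1 : (∑ i ∈ Finset.range N, X i) = fun ω => ∑ i ∈ Finset.range N, X i ω := by
        funext ω; simp
      rw [h1, integral_finset_sum _ fun i _ => hXint i]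
      have hc : ∀ i ∈ Finset.range N, ∫ ω, X i ω ∂μ = 0 := fun i _ => hXmean i
      rw [Finset.sum_congr rfl hc, Finset.sum_const, smul_zero]
    have hSSmean : μ[∑ i ∈ Finset.range N, Y i] = N * s2 := by
      have h1 : (∑ i ∈ Finset.range N, Y i) = fun ω => ∑ i ∈ Finset.range N, Y i ω := by
        funext ω; simp
      rw [h1, integral_finset_sum _ fun i _ => hYint i]
      have hc : ∀ i ∈ Finset.range N, ∫ ω, Y i ω ∂μ = s2 := fun i _ => hYmean i
      rw [Finset.sum_congr rfl hc, Finset.sum_const, Finset.card_range, nsmul_eq_mul]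
    -- Chebyshev for the sum of squares
    have hchebA : μ {ω | ε / 2 * ((N:ℝ) * s2)
          ≤ |(∑ i ∈ Finset.range N, Y i) ω - (N:ℝ) * s2|}
        ≤ ENNReal.ofReal ((4 * L / ε ^ 2) / N) := by
      have hc0 : (0:ℝ) < ε / 2 * ((N:ℝ) * s2) := by positivity
      have h := meas_ge_le_variance_div_sq
        (memLp_finset_sum' _ fun i (_ : i ∈ Finset.range N) => hY2L i) hc0
      rw [hSSmean] at h
      refine le_trans h (ENNReal.ofReal_le_ofReal ?_)
      calc variance (∑ i ∈ Finset.range N, Y i) μ / (ε / 2 * ((N:ℝ) * s2)) ^ 2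
          ≤ ((N:ℝ) * (L * s2 ^ 2)) / (ε / 2 * ((N:ℝ) * s2)) ^ 2 := by
            gcongr
        _ = (4 * L / ε ^ 2) / N := by
            field_simp
            ring
    -- Chebyshev for the plain sum
    have hchebB : μ {ω | Real.sqrt (ε / 2 * s2) * (N:ℝ)
          ≤ |(∑ i ∈ Finset.range N, X i) ω - 0|}
        ≤ ENNReal.ofReal ((2 / ε) / N) := by
      have hc0 : (0:ℝ) < Real.sqrt (ε / 2 * s2) * (N:ℝ) :=
        mul_pos (Real.sqrt_pos.mpr (by positivity)) hNR
      have h := meas_ge_le_variance_div_sq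
        (memLp_finset_sum' _ fun i (_ : i ∈ Finset.range N) => hX2L i) hc0
      rw [hSXmean] at h
      refine le_trans h (ENNReal.ofReal_le_ofReal ?_)
      have hsq : (Real.sqrt (ε / 2 * s2) * (N:ℝ)) ^ 2 = ε / 2 * s2 * (N:ℝ) ^ 2 := by
        rw [mul_pow, Real.sq_sqrt (by positivity)]
      rw [hvarSX, hsq]
      have heq2 : (N:ℝ) * s2 / (ε / 2 * s2 * (N:ℝ) ^ 2) = (2 / ε) / (N:ℝ) := by
        field_simp
      rw [heq2]
    -- inclusion of events
    have hincl : {ω | ε < |Vhat N ω / VarN N - 1|}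
        ⊆ {ω | ε / 2 * ((N:ℝ) * s2) ≤ |(∑ i ∈ Finset.range N, Y i) ω - (N:ℝ) * s2|}
          ∪ {ω | Real.sqrt (ε / 2 * s2) * (N:ℝ) ≤ |(∑ i ∈ Finset.range N, X i) ω - 0|} := by
      intro ω hω
      simp only [Set.mem_setOf_eq] at hω
      by_contra hcon
      simp only [Set.mem_union, Set.mem_setOf_eq, not_or, not_le] at hcon
      obtain ⟨h1, h2⟩ := hcon
      have hSSω : (∑ i ∈ Finset.range N, Y i) ω = ∑ i ∈ Finset.range N, X i ω ^ 2 := by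
        simp [hYdef]
      have hSXω : (∑ i ∈ Finset.range N, X i) ω = ∑ i ∈ Finset.range N, X i ω := by
        simp
      rw [hSSω] at h1
      rw [hSXω, sub_zero] at h2
      have hθω : θhat N ω = θ + (∑ i ∈ Finset.range N, X i ω) / N := by
        rw [hθhat]
        have hc : ∀ i ∈ Finset.range N, βhat N i ω = X i ω + θ := fun i _ => hXhat i ω
        rw [Finset.sum_congr rfl hc, Finset.sum_add_distrib, Finset.sum_const,
          Finset.card_range, nsmul_eq_mul]
        field_simp
        ring
      have hsumsq : ∑ i ∈ Finset.range N, (βhat N i ω - θhat N ω) ^ 2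
          = (∑ i ∈ Finset.range N, X i ω ^ 2)
            - (∑ i ∈ Finset.range N, X i ω) ^ 2 / N := by
        have hc : ∀ i ∈ Finset.range N, (βhat N i ω - θhat N ω) ^ 2
            = X i ω ^ 2 - (2 * ((∑ jj ∈ Finset.range N, X jj ω) / N)) * X i ω
              + ((∑ jj ∈ Finset.range N, X jj ω) / N) ^ 2 := by
          intro i _
          rw [hXhat i ω, hθω]
          ring
        rw [Finset.sum_congr rfl hc]
        rw [Finset.sum_add_distrib, Finset.sum_sub_distrib, ← Finset.mul_sum,
          Finset.sum_const, Finset.card_range, nsmul_eq_mul]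
        field_simp
        ring
      have hid : Vhat N ω / VarN N - 1
          = ((∑ i ∈ Finset.range N, X i ω ^ 2) - N * s2) / ((N:ℝ) * s2)
            - (∑ i ∈ Finset.range N, X i ω) ^ 2 / ((N:ℝ) ^ 2 * s2) := by
        rw [hVhat, hsumsq, hVar]
        field_simp
        ring
      have hbA : |((∑ i ∈ Finset.range N, X i ω ^ 2) - N * s2) / ((N:ℝ) * s2)| < ε / 2 := by
        rw [abs_div, abs_of_pos (by positivity : (0:ℝ) < (N:ℝ) * s2),
          div_lt_iff₀ (by positivity : (0:ℝ) < (N:ℝ) * s2)]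
        calc |(∑ i ∈ Finset.range N, X i ω ^ 2) - ↑N * s2| < ε / 2 * (↑N * s2) := h1
          _ = ε / 2 * (↑N * s2) := rfl
      have hbB0 : (0:ℝ) ≤ (∑ i ∈ Finset.range N, X i ω) ^ 2 / ((N:ℝ) ^ 2 * s2) := by
        positivity
      have hbB : (∑ i ∈ Finset.range N, X i ω) ^ 2 / ((N:ℝ) ^ 2 * s2) < ε / 2 := by
        rw [div_lt_iff₀ (by positivity : (0:ℝ) < (N:ℝ) ^ 2 * s2)]
        have hsq : (∑ i ∈ Finset.range N, X i ω) ^ 2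
            < (Real.sqrt (ε / 2 * s2) * (N:ℝ)) ^ 2 := by
          calc (∑ i ∈ Finset.range N, X i ω) ^ 2
              = |∑ i ∈ Finset.range N, X i ω| ^ 2 := (sq_abs _).symm
            _ < (Real.sqrt (ε / 2 * s2) * (N:ℝ)) ^ 2 :=
                pow_lt_pow_left₀ h2 (abs_nonneg _) (by norm_num)
        have hsq2 : (Real.sqrt (ε / 2 * s2) * (N:ℝ)) ^ 2 = ε / 2 * s2 * (N:ℝ) ^ 2 := by
          rw [mul_pow, Real.sq_sqrt (by positivity)]
        nlinarith [hsq, hsq2]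
      have habs : |Vhat N ω / VarN N - 1| < ε := by
        rw [hid]
        have htri : |((∑ i ∈ Finset.range N, X i ω ^ 2) - N * s2) / ((N:ℝ) * s2)
            - (∑ i ∈ Finset.range N, X i ω) ^ 2 / ((N:ℝ) ^ 2 * s2)|
            ≤ |((∑ i ∈ Finset.range N, X i ω ^ 2) - N * s2) / ((N:ℝ) * s2)|
              + |(∑ i ∈ Finset.range N, X i ω) ^ 2 / ((N:ℝ) ^ 2 * s2)| := abs_sub _ _
        have hB' : |(∑ i ∈ Finset.range N, X i ω) ^ 2 / ((N:ℝ) ^ 2 * s2)| < ε / 2 := by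
          rw [abs_of_nonneg hbB0]
          exact hbB
        linarith
      linarith
    -- put the pieces together
    calc μ {ω | ε < |Vhat N ω / VarN N - 1|}
        ≤ μ ({ω | ε / 2 * ((N:ℝ) * s2) ≤ |(∑ i ∈ Finset.range N, Y i) ω - (N:ℝ) * s2|}
          ∪ {ω | Real.sqrt (ε / 2 * s2) * (N:ℝ)
              ≤ |(∑ i ∈ Finset.range N, X i) ω - 0|}) := measure_mono hincl
      _ ≤ μ {ω | ε / 2 * ((N:ℝ) * s2) ≤ |(∑ i ∈ Finset.range N, Y i) ω - (N:ℝ) * s2|}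
          + μ {ω | Real.sqrt (ε / 2 * s2) * (N:ℝ)
              ≤ |(∑ i ∈ Finset.range N, X i) ω - 0|} := measure_union_le _ _
      _ ≤ ENNReal.ofReal ((4 * L / ε ^ 2) / N) + ENNReal.ofReal ((2 / ε) / N) :=
          add_le_add hchebA hchebB
      _ = ENNReal.ofReal (Cb / N) := by
          rw [← ENNReal.ofReal_add
            (div_nonneg (div_nonneg (by linarith : (0:ℝ) ≤ 4 * L) (sq_nonneg ε)) hNR.le)
            (div_nonneg (div_nonneg (by norm_num : (0:ℝ) ≤ 2) hε.le) hNR.le)]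
          congr 1
          rw [hCbdef, add_div]
  -- conclude
  have h0 : Tendsto (fun N : ℕ => ENNReal.ofReal (Cb / N)) atTop (nhds 0) := by
    have h1 : Tendsto (fun N : ℕ => Cb / N) atTop (nhds 0) :=
      tendsto_const_div_atTop_nhds_zero_nat Cb
    have h2 := ENNReal.tendsto_ofReal h1
    simpa using h2
  refine tendsto_of_tendsto_of_tendsto_of_le_of_le' tendsto_const_nhds h0 ?_ ?_
  · exact Filter.Eventually.of_forall fun _ => zero_le
  · filter_upwards [eventually_ge_atTop 1] with N hN using key N hN
end
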